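/- Let (M, 𝒜) be an uncertainty matroid on a finite ground set E. Then the set of all elements of E that are uncertain and uncolored is a feasible query. -/

import Mathlib

open Matroid

variable {α : Type*}

noncomputable local instance : DecidableEq α := Classical.decEq α
attribute [local instance] Classical.propDecidable

/-- `A` is an uncertainty area function for `M`: each element of the ground set gets a
nonempty bounded set of reals. -/
def IsAreaFun (M : Matroid α) (A : α → Set ℝ) : Prop :=
  ∀ e ∈ M.E, (A e).Nonempty ∧ BddBelow (A e) ∧ BddAbove (A e)

/-- A realization: a weight function with `w e ∈ A e` for every element of the ground set. -/
def Realization (M : Matroid α) (A : α → Set ℝ) (w : α → ℝ) : Prop :=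
  ∀ e ∈ M.E, w e ∈ A e

/-- The total `w`-weight of a set. -/
noncomputable def setWeight (w : α → ℝ) (T : Set α) : ℝ := ∑ᶠ e ∈ T, w e

/-- A `w`-basis: a basis of `M` of minimum total `w`-weight. -/
def IsMinBasis (M : Matroid α) (w : α → ℝ) (T : Set α) : Prop :=
  M.IsBase T ∧ ∀ B, M.IsBase B → setWeight w T ≤ setWeight w B

/-- A uniformly optimal basis (an `A`-basis): a `w`-basis for every realization `w`. -/
def IsUOB (M : Matroid α) (A : α → Set ℝ) (T : Set α) : Prop :=
  ∀ w, Realization M A w → IsMinBasis M w T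

/-- An element is certain if its area is a singleton. -/
def Certain (A : α → Set ℝ) (e : α) : Prop := ∃ r : ℝ, A e = {r}

/-- `e` is blue if every realization admits a minimum weight basis containing `e`. -/
def Blue (M : Matroid α) (A : α → Set ℝ) (e : α) : Prop :=
  ∀ w, Realization M A w → ∃ T, IsMinBasis M w T ∧ e ∈ T

/-- `e` is red if every realization admits a minimum weight basis avoiding `e`. -/
def Red (M : Matroid α) (A : α → Set ℝ) (e : α) : Prop :=
  ∀ w, Realization M A w → ∃ T, IsMinBasis M w T ∧ e ∉ T

/-- `e` is colored if it is blue or red. -/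
def Colored (M : Matroid α) (A : α → Set ℝ) (e : α) : Prop :=
  Blue M A e ∨ Red M A e

/-- `B` is a revelation of `X` in `(M, A)`: on `X` each area is replaced by a singleton
subset of itself, and outside `X` areas are unchanged. -/
def IsRevelation (M : Matroid α) (A : α → Set ℝ) (X : Set α) (B : α → Set ℝ) : Prop :=
  (∀ e ∈ X, ∃ r ∈ A e, B e = {r}) ∧ ∀ e ∉ X, B e = A e

/-- `F ⊆ E` is a feasible query if every revelation of `F` admits a uniformly optimal basis. -/
def FeasibleQuery (M : Matroid α) (A : α → Set ℝ) (F : Set α) : Prop :=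
  F ⊆ M.E ∧ ∀ B, IsRevelation M A F B → ∃ T, IsUOB M B T

/-! ### setWeight lemmas -/

lemma setWeight_eq_sum {T : Set α} (hT : T.Finite) (w : α → ℝ) :
    setWeight w T = ∑ e ∈ hT.toFinset, w e := by
  rw [setWeight, ← finsum_mem_coe_finset, Set.Finite.coe_toFinset]

lemma setWeight_congr {T : Set α} {w v : α → ℝ} (h : ∀ e ∈ T, w e = v e) :
    setWeight w T = setWeight v T :=
  finsum_mem_congr rfl h

lemma setWeight_insert {T : Set α} (w : α → ℝ) {f : α} (hT : T.Finite) (hf : f ∉ T) :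
    setWeight w (insert f T) = w f + setWeight w T := by
  classical
  have h1 : (insert f T : Set α) = ((insert f hT.toFinset : Finset α) : Set α) := by simp
  rw [setWeight, h1, finsum_mem_coe_finset,
    Finset.sum_insert (by simp [hf]), setWeight_eq_sum hT]

lemma setWeight_update (w : α → ℝ) (g : α) (a : ℝ) {T : Set α} (hT : T.Finite) :
    setWeight (Function.update w g a) T
      = setWeight w T + (if g ∈ T then a - w g else 0) := by
  classical
  by_cases hg : g ∈ T
  · have hg' : g ∈ hT.toFinset := hT.mem_toFinset.2 hg
    rw [setWeight_eq_sum hT, setWeight_eq_sum hT, if_pos hg,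
      Finset.sum_update_of_mem hg', ← Finset.erase_eq,
      ← Finset.sum_erase_add hT.toFinset w hg']
    ring
  · rw [if_neg hg, add_zero, setWeight_eq_sum hT, setWeight_eq_sum hT]
    refine Finset.sum_congr rfl fun x hx => ?_
    exact Function.update_of_ne (by rintro rfl; exact hg (hT.mem_toFinset.1 hx)) _ _

/-! ### generic helpers -/

lemma exists_minBasis (M : Matroid α) (hE : M.E.Finite) (w : α → ℝ) :
    ∃ T, IsMinBasis M w T := by
  have hfin : {B | M.IsBase B}.Finite :=
    hE.finite_subsets.subset fun B hB => hB.subset_ground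
  obtain ⟨B0, hB0⟩ := M.exists_isBase
  obtain ⟨T, hT, hTmin⟩ := Set.exists_min_image _ (setWeight w) hfin ⟨B0, hB0⟩
  exact ⟨T, hT, fun B hB => hTmin B hB⟩

lemma exists_ne_of_uncertain {A : α → Set ℝ} {g : α} {w : α → ℝ}
    (hgu : ¬ Certain A g) (hwg : w g ∈ A g) : ∃ a ∈ A g, a ≠ w g := by
  by_contra h
  push_neg at h
  exact hgu ⟨w g, Set.eq_singleton_iff_unique_mem.2 ⟨hwg, h⟩⟩

lemma realization_update {M : Matroid α} {A : α → Set ℝ} {w : α → ℝ} {g : α} {a : ℝ}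
    (hw : Realization M A w) (ha : a ∈ A g) :
    Realization M A (Function.update w g a) := by
  intro e he
  rcases eq_or_ne e g with rfl | hne
  · simpa using ha
  · rw [Function.update_of_ne hne]; exact hw e he

/-- If `D` is a min basis for the weight obtained by lowering `g`, and `g ∉ D`,
then `D` is a min basis for the original weight. -/
lemma min_update_lower {M : Matroid α} (hE : M.E.Finite) {w : α → ℝ} {g : α} {a : ℝ}
    (hlt : a < w g) {D : Set α}
    (hD : IsMinBasis M (Function.update w g a) D) (hgD : g ∉ D) :
    IsMinBasis M w D := by
  refine ⟨hD.1, fun R hR => ?_⟩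
  have hDfin : D.Finite := hE.subset hD.1.subset_ground
  have hRfin : R.Finite := hE.subset hR.subset_ground
  have eD := setWeight_update w g a hDfin
  rw [if_neg hgD, add_zero] at eD
  have eR := setWeight_update w g a hRfin
  have h1 := hD.2 _ hR
  have hite : (if g ∈ R then a - w g else 0) ≤ 0 := by
    split <;> linarith
  linarith

/-! ### the three coexistence lemmas -/

lemma blue_blue {M : Matroid α} {A : α → Set ℝ} {f g : α} {w : α → ℝ}
    (hE : M.E.Finite) (hfg : f ≠ g) (hgE : g ∈ M.E)
    (hf : Blue M A f) (hg : Blue M A g) (hgu : ¬ Certain A g)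
    (hw : Realization M A w) :
    ∃ D, IsMinBasis M w D ∧ f ∈ D ∧ g ∈ D := by
  classical
  obtain ⟨a, haA, hane⟩ := exists_ne_of_uncertain hgu (hw g hgE)
  set v := Function.update w g a with hv_def
  have hv : Realization M A v := realization_update hw haA
  rcases hane.lt_or_gt with hlt | hgt
  · obtain ⟨Dg, hDg, hgDg⟩ := hg w hw
    obtain ⟨Bv, hBv, hfBv⟩ := hf v hv
    have hDgfin : Dg.Finite := hE.subset hDg.1.subset_ground
    have hBvfin : Bv.Finite := hE.subset hBv.1.subset_ground
    have e2 : setWeight v Dg = setWeight w Dg + (a - w g) := by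
      rw [hv_def, setWeight_update w g a hDgfin, if_pos hgDg]
    have hgBv : g ∈ Bv := by
      by_contra hgBv
      have e1 : setWeight v Bv = setWeight w Bv := by
        rw [hv_def, setWeight_update w g a hBvfin, if_neg hgBv, add_zero]
      have h1 : setWeight v Bv ≤ setWeight v Dg := hBv.2 _ hDg.1
      have h2 : setWeight w Dg ≤ setWeight w Bv := hDg.2 _ hBv.1
      linarith
    have e1 : setWeight v Bv = setWeight w Bv + (a - w g) := by
      rw [hv_def, setWeight_update w g a hBvfin, if_pos hgBv]
    refine ⟨Bv, ⟨hBv.1, fun R hR => ?_⟩, hfBv, hgBv⟩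
    have h1 : setWeight v Bv ≤ setWeight v Dg := hBv.2 _ hDg.1
    have h2 : setWeight w Dg ≤ setWeight w R := hDg.2 _ hR
    linarith
  · obtain ⟨Bf, hBf, hfBf⟩ := hf w hw
    by_cases hgBf : g ∈ Bf
    · exact ⟨Bf, hBf, hfBf, hgBf⟩
    exfalso
    obtain ⟨Bv, hBv, hgBv⟩ := hg v hv
    have hBffin : Bf.Finite := hE.subset hBf.1.subset_ground
    have hBvfin : Bv.Finite := hE.subset hBv.1.subset_ground
    have e1 : setWeight v Bv = setWeight w Bv + (a - w g) := by
      rw [hv_def, setWeight_update w g a hBvfin, if_pos hgBv]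
    have e2 : setWeight v Bf = setWeight w Bf := by
      rw [hv_def, setWeight_update w g a hBffin, if_neg hgBf, add_zero]
    have h1 : setWeight v Bv ≤ setWeight v Bf := hBv.2 _ hBf.1
    have h2 : setWeight w Bf ≤ setWeight w Bv := hBf.2 _ hBv.1
    linarith

lemma blue_red {M : Matroid α} {A : α → Set ℝ} {f g : α} {w : α → ℝ}
    (hE : M.E.Finite) (hfg : f ≠ g) (hfE : f ∈ M.E) (hgE : g ∈ M.E)
    (hf : Blue M A f) (hfu : ¬ Certain A f)
    (hg : Red M A g) (hgu : ¬ Certain A g)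
    (hw : Realization M A w) :
    ∃ D, IsMinBasis M w D ∧ f ∈ D ∧ g ∉ D := by
  classical
  obtain ⟨a, haA, hane⟩ := exists_ne_of_uncertain hgu (hw g hgE)
  set v := Function.update w g a with hv_def
  have hv : Realization M A v := realization_update hw haA
  have hvf : v f = w f := by rw [hv_def, Function.update_of_ne hfg]
  obtain ⟨C0, hC0, hgC0⟩ := hg w hw
  have hC0fin : C0.Finite := hE.subset hC0.1.subset_ground
  rcases hane.lt_or_gt with hlt | hgt
  · -- a < w g
    obtain ⟨Cv, hCv, hgCv⟩ := hg v hv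
    obtain ⟨Bv, hBv, hfBv⟩ := hf v hv
    by_cases hgBv : g ∈ Bv
    · have hvfA : v f ∈ A f := hv f hfE
      obtain ⟨b, hbA, hbne⟩ := exists_ne_of_uncertain hfu hvfA
      set u := Function.update v f b with hu_def
      have hu : Realization M A u := realization_update hv hbA
      have hBvfin : Bv.Finite := hE.subset hBv.1.subset_ground
      have hCvfin : Cv.Finite := hE.subset hCv.1.subset_ground
      rcases hbne.lt_or_gt with hblt | hbgt
      · -- b < v f
        obtain ⟨Eg, hEg, hgEg⟩ := hg u hu
        have hEgfin : Eg.Finite := hE.subset hEg.1.subset_ground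
        have hfEg : f ∈ Eg := by
          by_contra hfEg
          have e1 : setWeight u Eg = setWeight v Eg := by
            rw [hu_def, setWeight_update v f b hEgfin, if_neg hfEg, add_zero]
          have e2 : setWeight u Bv = setWeight v Bv + (b - v f) := by
            rw [hu_def, setWeight_update v f b hBvfin, if_pos hfBv]
          have h1 : setWeight u Eg ≤ setWeight u Bv := hEg.2 _ hBv.1
          have h2 : setWeight v Bv ≤ setWeight v Eg := hBv.2 _ hEg.1
          linarith
        have hEgv : IsMinBasis M v Eg := by
          refine ⟨hEg.1, fun R hR => ?_⟩
          have hRfin : R.Finite := hE.subset hR.subset_ground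
          have e1 : setWeight u Eg = setWeight v Eg + (b - v f) := by
            rw [hu_def, setWeight_update v f b hEgfin, if_pos hfEg]
          by_cases hfR : f ∈ R
          · have e2 : setWeight u R = setWeight v R + (b - v f) := by
              rw [hu_def, setWeight_update v f b hRfin, if_pos hfR]
            have h1 : setWeight u Eg ≤ setWeight u R := hEg.2 _ hR
            linarith
          · have e2 : setWeight u Bv = setWeight v Bv + (b - v f) := by
              rw [hu_def, setWeight_update v f b hBvfin, if_pos hfBv]
            have h1 : setWeight u Eg ≤ setWeight u Bv := hEg.2 _ hBv.1
            have h2 : setWeight v Bv ≤ setWeight v R := hBv.2 _ hR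
            linarith
        exact ⟨Eg, min_update_lower hE hlt hEgv hgEg, hfEg, hgEg⟩
      · -- v f < b
        have hfCv : f ∈ Cv := by
          by_contra hfCv
          obtain ⟨Bu, hBu, hfBu⟩ := hf u hu
          have hBufin : Bu.Finite := hE.subset hBu.1.subset_ground
          have e1 : setWeight u Bu = setWeight v Bu + (b - v f) := by
            rw [hu_def, setWeight_update v f b hBufin, if_pos hfBu]
          have e2 : setWeight u Cv = setWeight v Cv := by
            rw [hu_def, setWeight_update v f b hCvfin, if_neg hfCv, add_zero]
          have h1 : setWeight u Bu ≤ setWeight u Cv := hBu.2 _ hCv.1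
          have h2 : setWeight v Cv ≤ setWeight v Bu := hCv.2 _ hBu.1
          linarith
        exact ⟨Cv, min_update_lower hE hlt hCv hgCv, hfCv, hgCv⟩
    · exact ⟨Bv, min_update_lower hE hlt hBv hgBv, hfBv, hgBv⟩
  · -- w g < a
    obtain ⟨Bv, hBv, hfBv⟩ := hf v hv
    have hBvfin : Bv.Finite := hE.subset hBv.1.subset_ground
    have e2 : setWeight v C0 = setWeight w C0 := by
      rw [hv_def, setWeight_update w g a hC0fin, if_neg hgC0, add_zero]
    have hgBv : g ∉ Bv := by
      intro hgBv
      have e1 : setWeight v Bv = setWeight w Bv + (a - w g) := by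
        rw [hv_def, setWeight_update w g a hBvfin, if_pos hgBv]
      have h1 : setWeight v Bv ≤ setWeight v C0 := hBv.2 _ hC0.1
      have h2 : setWeight w C0 ≤ setWeight w Bv := hC0.2 _ hBv.1
      linarith
    refine ⟨Bv, ⟨hBv.1, fun R hR => ?_⟩, hfBv, hgBv⟩
    have e1 : setWeight v Bv = setWeight w Bv := by
      rw [hv_def, setWeight_update w g a hBvfin, if_neg hgBv, add_zero]
    have h1 : setWeight v Bv ≤ setWeight v C0 := hBv.2 _ hC0.1
    have h2 : setWeight w C0 ≤ setWeight w R := hC0.2 _ hR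
    linarith

lemma red_red {M : Matroid α} {A : α → Set ℝ} {f g : α} {w : α → ℝ}
    (hE : M.E.Finite) (hfg : f ≠ g) (hfE : f ∈ M.E) (hgE : g ∈ M.E)
    (hf : Red M A f) (hfu : ¬ Certain A f)
    (hg : Red M A g) (hgu : ¬ Certain A g)
    (hw : Realization M A w) :
    ∃ D, IsMinBasis M w D ∧ f ∉ D ∧ g ∉ D := by
  classical
  obtain ⟨a, haA, hane⟩ := exists_ne_of_uncertain hgu (hw g hgE)
  set v := Function.update w g a with hv_def
  have hv : Realization M A v := realization_update hw haA
  obtain ⟨C0, hC0, hgC0⟩ := hg w hw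
  have hC0fin : C0.Finite := hE.subset hC0.1.subset_ground
  rcases hane.lt_or_gt with hlt | hgt
  · -- a < w g
    obtain ⟨Cv, hCv, hfCv⟩ := hf v hv
    have hCvfin : Cv.Finite := hE.subset hCv.1.subset_ground
    by_cases hgCv : g ∈ Cv
    · have hvfA : v f ∈ A f := hv f hfE
      obtain ⟨b, hbA, hbne⟩ := exists_ne_of_uncertain hfu hvfA
      set u := Function.update v f b with hu_def
      have hu : Realization M A u := realization_update hv hbA
      rcases hbne.lt_or_gt with hblt | hbgt
      · -- b < v f
        obtain ⟨Dv, hDv, hgDv⟩ := hg v hv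
        have hDvfin : Dv.Finite := hE.subset hDv.1.subset_ground
        have hfDv : f ∉ Dv := by
          intro hfDv
          obtain ⟨Eu, hEu, hfEu⟩ := hf u hu
          have hEufin : Eu.Finite := hE.subset hEu.1.subset_ground
          have e1 : setWeight u Eu = setWeight v Eu := by
            rw [hu_def, setWeight_update v f b hEufin, if_neg hfEu, add_zero]
          have e2 : setWeight u Dv = setWeight v Dv + (b - v f) := by
            rw [hu_def, setWeight_update v f b hDvfin, if_pos hfDv]
          have h1 : setWeight u Eu ≤ setWeight u Dv := hEu.2 _ hDv.1
          have h2 : setWeight v Dv ≤ setWeight v Eu := hDv.2 _ hEu.1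
          linarith
        exact ⟨Dv, min_update_lower hE hlt hDv hgDv, hfDv, hgDv⟩
      · -- v f < b
        obtain ⟨Eg, hEg, hgEg⟩ := hg u hu
        have hEgfin : Eg.Finite := hE.subset hEg.1.subset_ground
        have hfEg : f ∉ Eg := by
          intro hfEg
          have e1 : setWeight u Eg = setWeight v Eg + (b - v f) := by
            rw [hu_def, setWeight_update v f b hEgfin, if_pos hfEg]
          have e2 : setWeight u Cv = setWeight v Cv := by
            rw [hu_def, setWeight_update v f b hCvfin, if_neg hfCv, add_zero]
          have h1 : setWeight u Eg ≤ setWeight u Cv := hEg.2 _ hCv.1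
          have h2 : setWeight v Cv ≤ setWeight v Eg := hCv.2 _ hEg.1
          linarith
        have hEgv : IsMinBasis M v Eg := by
          refine ⟨hEg.1, fun R hR => ?_⟩
          have e1 : setWeight u Eg = setWeight v Eg := by
            rw [hu_def, setWeight_update v f b hEgfin, if_neg hfEg, add_zero]
          have e2 : setWeight u Cv = setWeight v Cv := by
            rw [hu_def, setWeight_update v f b hCvfin, if_neg hfCv, add_zero]
          have h1 : setWeight u Eg ≤ setWeight u Cv := hEg.2 _ hCv.1
          have h2 : setWeight v Cv ≤ setWeight v R := hCv.2 _ hR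
          linarith
        exact ⟨Eg, min_update_lower hE hlt hEgv hgEg, hfEg, hgEg⟩
    · exact ⟨Cv, min_update_lower hE hlt hCv hgCv, hfCv, hgCv⟩
  · -- w g < a
    obtain ⟨Bv, hBv, hfBv⟩ := hf v hv
    have hBvfin : Bv.Finite := hE.subset hBv.1.subset_ground
    have e2 : setWeight v C0 = setWeight w C0 := by
      rw [hv_def, setWeight_update w g a hC0fin, if_neg hgC0, add_zero]
    have hgBv : g ∉ Bv := by
      intro hgBv
      have e1 : setWeight v Bv = setWeight w Bv + (a - w g) := by
        rw [hv_def, setWeight_update w g a hBvfin, if_pos hgBv]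
      have h1 : setWeight v Bv ≤ setWeight v C0 := hBv.2 _ hC0.1
      have h2 : setWeight w C0 ≤ setWeight w Bv := hC0.2 _ hBv.1
      linarith
    refine ⟨Bv, ⟨hBv.1, fun R hR => ?_⟩, hfBv, hgBv⟩
    have e1 : setWeight v Bv = setWeight w Bv := by
      rw [hv_def, setWeight_update w g a hBvfin, if_neg hgBv, add_zero]
    have h1 : setWeight v Bv ≤ setWeight v C0 := hBv.2 _ hC0.1
    have h2 : setWeight w C0 ≤ setWeight w R := hC0.2 _ hR
    linarith

/-! ### deletion and contraction -/

lemma restrict_compl_base_iff (N : Matroid α) {f : α} {B0 : Set α}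
    (hB0 : N.IsBase B0) (hfB0 : f ∉ B0) {B : Set α} :
    (N ↾ (N.E \ {f})).IsBase B ↔ N.IsBase B ∧ f ∉ B := by
  rw [isBase_restrict_iff Set.diff_subset]
  constructor
  · intro h
    have hB0X : B0 ⊆ N.E \ {f} := Set.subset_diff_singleton hB0.subset_ground hfB0
    exact ⟨hB0.isBase_of_isBasis_superset hB0X h, fun hfB => (h.subset hfB).2 rfl⟩
  · rintro ⟨hB, hfB⟩
    exact Matroid.IsBase.isBasis_of_subset Set.diff_subset hB
      (Set.subset_diff_singleton hB.subset_ground hfB)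

/-- Contraction of a single element, via dual restriction. -/
def con (M : Matroid α) (f : α) : Matroid α := (M✶ ↾ (M✶.E \ {f}))✶

lemma con_ground (M : Matroid α) (f : α) : (con M f).E = M.E \ {f} := rfl

lemma compl_diff_diff_eq {E B : Set α} {f : α} (hfE : f ∈ E) (hBE : B ⊆ E) :
    E \ ((E \ {f}) \ B) = insert f B := by
  ext x
  simp only [Set.mem_diff, Set.mem_singleton_iff, Set.mem_insert_iff]
  constructor
  · rintro ⟨hxE, hx⟩
    rcases eq_or_ne x f with rfl | hxf
    · exact Or.inl rfl
    · right
      by_contra hxB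
      exact hx ⟨⟨hxE, hxf⟩, hxB⟩
  · rintro (rfl | hxB)
    · exact ⟨hfE, fun h => h.1.2 rfl⟩
    · exact ⟨hBE hxB, fun h => h.2 hxB⟩

lemma con_base_iff {M : Matroid α} {f : α} {B0 : Set α}
    (hB0 : M.IsBase B0) (hfB0 : f ∈ B0) (B : Set α) :
    (con M f).IsBase B ↔ M.IsBase (insert f B) ∧ f ∉ B := by
  have hfE : f ∈ M.E := hB0.subset_ground hfB0
  have hdB0 : M✶.IsBase (M.E \ B0) := by
    rw [dual_isBase_iff Set.diff_subset, Set.diff_diff_cancel_left hB0.subset_ground]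
    exact hB0
  have hfd : f ∉ M.E \ B0 := fun h => h.2 hfB0
  rw [con, dual_isBase_iff']
  simp only [restrict_ground_eq]
  rw [restrict_compl_base_iff M✶ hdB0 hfd]
  simp only [dual_ground]
  constructor
  · rintro ⟨⟨hb, -⟩, hBX⟩
    have hBE : B ⊆ M.E := hBX.trans Set.diff_subset
    rw [dual_isBase_iff (Set.diff_subset.trans Set.diff_subset),
      compl_diff_diff_eq hfE hBE] at hb
    exact ⟨hb, fun hfB => (hBX hfB).2 rfl⟩
  · rintro ⟨hb, hfB⟩
    have hBE : B ⊆ M.E := (Set.subset_insert f B).trans hb.subset_ground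
    have hBX : B ⊆ M.E \ {f} := Set.subset_diff_singleton hBE hfB
    refine ⟨⟨?_, fun h => h.1.2 rfl⟩, hBX⟩
    rw [dual_isBase_iff (Set.diff_subset.trans Set.diff_subset),
      compl_diff_diff_eq hfE hBE]
    exact hb

/-! ### the main induction -/

lemma uob_of_all_certain {M : Matroid α} {A : α → Set ℝ} (hE : M.E.Finite)
    (hne : ∀ e ∈ M.E, (A e).Nonempty) (hcert : ∀ e ∈ M.E, Certain A e) :
    ∃ T, IsUOB M A T := by
  classical
  set w0 : α → ℝ := fun e => if h : e ∈ M.E then (hne e h).some else 0 with hw0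
  obtain ⟨T, hT⟩ := exists_minBasis M hE w0
  refine ⟨T, fun w hw => ⟨hT.1, fun R hR => ?_⟩⟩
  have hagree : ∀ X : Set α, X ⊆ M.E → setWeight w X = setWeight w0 X := by
    intro X hXE
    apply setWeight_congr
    intro e heX
    have heE := hXE heX
    obtain ⟨r, hr⟩ := hcert e heE
    have h1 : w e = r := by
      have := hw e heE; rwa [hr, Set.mem_singleton_iff] at this
    have h2 : w0 e = r := by
      have hmem : w0 e ∈ A e := by
        simp only [hw0, dif_pos heE]; exact (hne e heE).some_mem
      rwa [hr, Set.mem_singleton_iff] at hmem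
    rw [h1, h2]
  rw [hagree T hT.1.subset_ground, hagree R hR.subset_ground]
  exact hT.2 _ hR

lemma main_induction (n : ℕ) :
    ∀ (M : Matroid α) (A : α → Set ℝ), M.E.Finite → M.E.ncard ≤ n →
      (∀ e ∈ M.E, (A e).Nonempty) →
      (∀ e ∈ M.E, ¬ Certain A e → Colored M A e) →
      ∃ T, IsUOB M A T := by
  classical
  induction n with
  | zero =>
    intro M A hE hcard hne _
    refine uob_of_all_certain hE hne fun e he => ?_
    have hempty : M.E = ∅ := by
      rw [← Set.ncard_eq_zero hE]; omega
    rw [hempty] at he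
    exact absurd he (Set.notMem_empty e)
  | succ n IH =>
    intro M A hE hcard hne hcol
    set w0 : α → ℝ := fun e => if h : e ∈ M.E then (hne e h).some else 0 with hw0
    have hw0r : Realization M A w0 := by
      intro e he; simp only [hw0, dif_pos he]; exact (hne e he).some_mem
    by_cases hbu : ∃ f ∈ M.E, ¬ Certain A f ∧ Blue M A f
    · -- contract a blue uncertain element
      obtain ⟨f, hfE, hfu, hfblue⟩ := hbu
      obtain ⟨D0, hD0, hfD0⟩ := hfblue w0 hw0r
      have hB0 : M.IsBase D0 := hD0.1
      set M' := con M f with hM'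
      have hG : M'.E = M.E \ {f} := con_ground M f
      have hE' : M'.E.Finite := by rw [hG]; exact hE.diff
      have hcard' : M'.E.ncard ≤ n := by
        rw [hG]
        have := Set.ncard_diff_singleton_lt_of_mem hfE hE
        omega
      have hne' : ∀ e ∈ M'.E, (A e).Nonempty := by
        intro e he; rw [hG] at he; exact hne e he.1
      have hp : (A f).Nonempty := hne f hfE
      have hext : ∀ w : α → ℝ, Realization M' A w →
          Realization M A (Function.update w f hp.some) := by
        intro w hw e he
        rcases eq_or_ne e f with rfl | hef
        · rw [Function.update_self]; exact hp.some_mem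
        · rw [Function.update_of_ne hef]
          exact hw e (by rw [hG]; exact ⟨he, hef⟩)
      have hbase : ∀ B : Set α, M'.IsBase B ↔ M.IsBase (insert f B) ∧ f ∉ B :=
        fun B => con_base_iff hB0 hfD0 B
      -- transform a min basis of M at the updated weight into one of M' at w
      have hproj : ∀ (w : α → ℝ) (D : Set α),
          IsMinBasis M (Function.update w f hp.some) D → f ∈ D →
          IsMinBasis M' w (D \ {f}) := by
        intro w D hD hfD
        set w' := Function.update w f hp.some with hw'
        have hDfin : D.Finite := hE.subset hD.1.subset_ground
        have hD'fin : (D \ {f}).Finite := hDfin.diff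
        have hfD' : f ∉ D \ {f} := fun h => h.2 rfl
        have hDeq : insert f (D \ {f}) = D := by
          rw [Set.insert_diff_singleton, Set.insert_eq_self.mpr hfD]
        constructor
        · rw [hbase]
          exact ⟨by rw [hDeq]; exact hD.1, hfD'⟩
        · intro B' hB'
          obtain ⟨hB'base, hfB'⟩ := (hbase B').1 hB'
          have hB'fin : B'.Finite := hE'.subset hB'.subset_ground
          have eq1 : setWeight w' D = w' f + setWeight w' (D \ {f}) := by
            conv_lhs => rw [← hDeq]
            exact setWeight_insert w' hD'fin hfD'
          have eq2 : setWeight w' (insert f B') = w' f + setWeight w' B' :=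
            setWeight_insert w' hB'fin hfB'
          have h1 : setWeight w' D ≤ setWeight w' (insert f B') := hD.2 _ hB'base
          have e3 : setWeight w' (D \ {f}) = setWeight w (D \ {f}) := by
            rw [hw', setWeight_update w f hp.some hD'fin, if_neg hfD', add_zero]
          have e4 : setWeight w' B' = setWeight w B' := by
            rw [hw', setWeight_update w f hp.some hB'fin, if_neg hfB', add_zero]
          linarith
      have hcol' : ∀ e ∈ M'.E, ¬ Certain A e → Colored M' A e := by
        intro g hgE' hgu
        rw [hG] at hgE'
        have hgE : g ∈ M.E := hgE'.1
        have hgf : g ≠ f := hgE'.2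
        rcases hcol g hgE hgu with hgb | hgr
        · left
          intro w hw
          obtain ⟨D, hD, hfD, hgD⟩ :=
            blue_blue hE hgf.symm hgE hfblue hgb hgu (hext w hw)
          exact ⟨D \ {f}, hproj w D hD hfD, ⟨hgD, hgf⟩⟩
        · right
          intro w hw
          obtain ⟨D, hD, hfD, hgD⟩ :=
            blue_red hE hgf.symm hfE hgE hfblue hfu hgr hgu (hext w hw)
          exact ⟨D \ {f}, hproj w D hD hfD, fun h => hgD h.1⟩
      obtain ⟨T0, hT0⟩ := IH M' A hE' hcard' hne' hcol'
      refine ⟨insert f T0, fun w hw => ?_⟩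
      have hwM' : Realization M' A w := by
        intro e he; rw [hG] at he; exact hw e he.1
      have hmin0 := hT0 w hwM'
      obtain ⟨hT0base, hfT0⟩ := (hbase T0).1 hmin0.1
      have hT0fin : T0.Finite := hE'.subset hmin0.1.subset_ground
      refine ⟨hT0base, fun R hR => ?_⟩
      obtain ⟨D, hD, hfD⟩ := hfblue w hw
      have hDfin : D.Finite := hE.subset hD.1.subset_ground
      have hDeq : insert f (D \ {f}) = D := by
        rw [Set.insert_diff_singleton, Set.insert_eq_self.mpr hfD]
      have hD'base : M'.IsBase (D \ {f}) :=
        (hbase _).2 ⟨by rw [hDeq]; exact hD.1, fun h => h.2 rfl⟩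
      have e1 : setWeight w (insert f T0) = w f + setWeight w T0 :=
        setWeight_insert w hT0fin hfT0
      have e2 : setWeight w D = w f + setWeight w (D \ {f}) := by
        conv_lhs => rw [← hDeq]
        exact setWeight_insert w (hDfin.diff) (fun h => h.2 rfl)
      have h1 : setWeight w T0 ≤ setWeight w (D \ {f}) := hmin0.2 _ hD'base
      have h2 : setWeight w D ≤ setWeight w R := hD.2 _ hR
      linarith
    · by_cases hru : ∃ f ∈ M.E, ¬ Certain A f
      · -- delete a red uncertain element
        obtain ⟨f, hfE, hfu⟩ := hru
        have hfred : Red M A f := by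
          rcases hcol f hfE hfu with hb | hr
          · exact absurd ⟨f, hfE, hfu, hb⟩ hbu
          · exact hr
        obtain ⟨D0, hD0, hfD0⟩ := hfred w0 hw0r
        set M' := M ↾ (M.E \ {f}) with hM'
        have hG : M'.E = M.E \ {f} := rfl
        have hbase : ∀ B : Set α, M'.IsBase B ↔ M.IsBase B ∧ f ∉ B :=
          fun B => restrict_compl_base_iff M hD0.1 hfD0
        have hE' : M'.E.Finite := by rw [hG]; exact hE.diff
        have hcard' : M'.E.ncard ≤ n := by
          rw [hG]
          have := Set.ncard_diff_singleton_lt_of_mem hfE hE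
          omega
        have hne' : ∀ e ∈ M'.E, (A e).Nonempty := by
          intro e he; rw [hG] at he; exact hne e he.1
        have hp : (A f).Nonempty := hne f hfE
        have hext : ∀ w : α → ℝ, Realization M' A w →
            Realization M A (Function.update w f hp.some) := by
          intro w hw e he
          rcases eq_or_ne e f with rfl | hef
          · rw [Function.update_self]; exact hp.some_mem
          · rw [Function.update_of_ne hef]
            exact hw e (by rw [hG]; exact ⟨he, hef⟩)
        have hcol' : ∀ e ∈ M'.E, ¬ Certain A e → Colored M' A e := by
          intro g hgE' hgu
          rw [hG] at hgE'
          have hgE : g ∈ M.E := hgE'.1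
          have hgf : g ≠ f := hgE'.2
          have hgred : Red M A g := by
            rcases hcol g hgE hgu with hb | hr
            · exact absurd ⟨g, hgE, hgu, hb⟩ hbu
            · exact hr
          right
          intro w hw
          set w' := Function.update w f hp.some with hw'
          obtain ⟨D, hD, hfD, hgD⟩ :=
            red_red hE (Ne.symm hgf) hfE hgE hfred hfu hgred hgu (hext w hw)
          have hDfin : D.Finite := hE.subset hD.1.subset_ground
          refine ⟨D, ⟨(hbase D).2 ⟨hD.1, hfD⟩, fun B' hB' => ?_⟩, hgD⟩
          obtain ⟨hB'base, hfB'⟩ := (hbase B').1 hB'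
          have hB'fin : B'.Finite := hE.subset hB'base.subset_ground
          have e1 : setWeight w' D = setWeight w D := by
            rw [hw', setWeight_update w f hp.some hDfin, if_neg hfD, add_zero]
          have e2 : setWeight w' B' = setWeight w B' := by
            rw [hw', setWeight_update w f hp.some hB'fin, if_neg hfB', add_zero]
          have h1 : setWeight w' D ≤ setWeight w' B' := hD.2 _ hB'base
          linarith
        obtain ⟨T0, hT0⟩ := IH M' A hE' hcard' hne' hcol'
        refine ⟨T0, fun w hw => ?_⟩
        have hwM' : Realization M' A w := by
          intro e he; rw [hG] at he; exact hw e he.1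
        have hmin0 := hT0 w hwM'
        obtain ⟨hT0base, hfT0⟩ := (hbase T0).1 hmin0.1
        refine ⟨hT0base, fun R hR => ?_⟩
        obtain ⟨D, hD, hfD⟩ := hfred w hw
        have hD'base : M'.IsBase D := (hbase D).2 ⟨hD.1, hfD⟩
        have h1 : setWeight w T0 ≤ setWeight w D := hmin0.2 _ hD'base
        have h2 : setWeight w D ≤ setWeight w R := hD.2 _ hR
        linarith
      · -- all certain
        push_neg at hru
        exact uob_of_all_certain hE hne fun e he => hru e he

/-- The set of all uncertain uncolored elements is a feasible query. -/
theorem uncolored_uncertain_feasible (M : Matroid α) (A : α → Set ℝ)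
    (hE : M.E.Finite) (hA : IsAreaFun M A) :
    FeasibleQuery M A {e ∈ M.E | ¬ Certain A e ∧ ¬ Colored M A e} := by
  classical
  constructor
  · exact Set.sep_subset _ _
  · intro B hB
    have hsub : ∀ e ∈ M.E, B e ⊆ A e := by
      intro e he
      by_cases hF : e ∈ {e ∈ M.E | ¬ Certain A e ∧ ¬ Colored M A e}
      · obtain ⟨r, hr, heq⟩ := hB.1 e hF
        rw [heq]
        exact Set.singleton_subset_iff.2 hr
      · rw [hB.2 e hF]
    have hne' : ∀ e ∈ M.E, (B e).Nonempty := by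
      intro e he
      by_cases hF : e ∈ {e ∈ M.E | ¬ Certain A e ∧ ¬ Colored M A e}
      · obtain ⟨r, _, heq⟩ := hB.1 e hF
        rw [heq]
        exact ⟨r, rfl⟩
      · rw [hB.2 e hF]
        exact (hA e he).1
    have hcol' : ∀ e ∈ M.E, ¬ Certain B e → Colored M B e := by
      intro e he hu
      have hF : e ∉ {e ∈ M.E | ¬ Certain A e ∧ ¬ Colored M A e} := by
        intro hF
        obtain ⟨r, _, heq⟩ := hB.1 e hF
        exact hu ⟨r, heq⟩
      have heq := hB.2 e hF
      have hCA : ¬ Certain A e := fun ⟨r, hr⟩ => hu ⟨r, by rw [heq, hr]⟩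
      have hcolA : Colored M A e := by
        by_contra hc
        exact hF ⟨he, hCA, hc⟩
      have htr : ∀ w, Realization M B w → Realization M A w := by
        intro w hw e' he'
        exact hsub e' he' (hw e' he')
      rcases hcolA with h | h
      · exact Or.inl fun w hw => h w (htr w hw)
      · exact Or.inr fun w hw => h w (htr w hw)
    exact main_induction M.E.ncard M B hE le_rfl hne' hcol'
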